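/- Let Γ be a discrete torsion-free subgroup of PSL(2,ℂ) containing the parabolic subgroup Γ_∞ of all elements of Γ fixing ∞, and suppose Γ_∞ contains two parabolic translations with ℝ-linearly independent translation vectors. Then for every γ ∈ Γ \ Γ_∞, the radius of the isometric sphere I(γ) is at most T, where T is the minimal Euclidean translation length among nontrivial elements of Γ_∞. -/

import Mathlib

open Complex Filter

/-- The parabolic translation `[[1,ω],[0,1]]` as an element of `SL(2,ℂ)`. -/
noncomputable def transMat (ω : ℂ) : Matrix.SpecialLinearGroup (Fin 2) ℂ :=
  ⟨!![1, ω; 0, 1], by simp [Matrix.det_fin_two_of]⟩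

lemma transMat_inv_coe (ω : ℂ) :
    (((transMat ω)⁻¹ : Matrix.SpecialLinearGroup (Fin 2) ℂ) : Matrix (Fin 2) (Fin 2) ℂ)
      = !![1, -ω; 0, 1] := by
  rw [Matrix.SpecialLinearGroup.coe_inv]
  simp [transMat, Matrix.adjugate_fin_two]

set_option linter.unreachableTactic false in
set_option linter.unusedTactic false in
lemma conj_coe (M : Matrix.SpecialLinearGroup (Fin 2) ℂ) (ω : ℂ) :
    ((M * transMat ω * M⁻¹ : Matrix.SpecialLinearGroup (Fin 2) ℂ) : Matrix (Fin 2) (Fin 2) ℂ) =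
    !![1 - M.1 0 0 * M.1 1 0 * ω, (M.1 0 0)^2 * ω;
       -(M.1 1 0)^2 * ω, 1 + M.1 0 0 * M.1 1 0 * ω] := by
  have hdet : M.1 0 0 * M.1 1 1 - M.1 0 1 * M.1 1 0 = 1 := by
    have := M.2
    rwa [Matrix.det_fin_two] at this
  simp only [Matrix.SpecialLinearGroup.coe_mul]
  ext i j
  fin_cases i <;> fin_cases j <;>
    simp [Matrix.SpecialLinearGroup.coe_inv, Matrix.adjugate_fin_two, transMat,
      Matrix.mul_apply, Fin.sum_univ_two, Fin.mk_zero, Fin.mk_one, Matrix.SpecialLinearGroup.coe_mul] <;>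
    first
      | ring1
      | linear_combination hdet
      | linear_combination (-1 : ℂ) * hdet

/-- The sequence `γ, γwγ⁻¹, (γwγ⁻¹)w(γwγ⁻¹)⁻¹, …` of iterated conjugations. -/
noncomputable def conjSeq (w γ : Matrix.SpecialLinearGroup (Fin 2) ℂ) :
    ℕ → Matrix.SpecialLinearGroup (Fin 2) ℂ
  | 0 => γ
  | n + 1 => conjSeq w γ n * w * (conjSeq w γ n)⁻¹

theorem shimizu_leutbecher (Γ : Subgroup (Matrix.SpecialLinearGroup (Fin 2) ℂ))
    (hdisc : ∀ f : ℕ → Matrix.SpecialLinearGroup (Fin 2) ℂ, (∀ n, f n ∈ Γ) →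
      Tendsto (fun n => ((f n : Matrix (Fin 2) (Fin 2) ℂ))) atTop
        (nhds (1 : Matrix (Fin 2) (Fin 2) ℂ)) →
      ∀ᶠ n in atTop, f n = 1)
    (htf : ∀ g ∈ Γ, ∀ n : ℕ, 0 < n → g ^ n = 1 → g = 1)
    (hpar : ∀ g ∈ Γ, (g : Matrix (Fin 2) (Fin 2) ℂ) 1 0 = 0 → ∃ ω : ℂ, g = transMat ω)
    (ω₁ ω₂ : ℂ) (hind : LinearIndependent ℝ ![ω₁, ω₂])
    (h₁ : transMat ω₁ ∈ Γ) (h₂ : transMat ω₂ ∈ Γ)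
    (T : ℝ)
    (hT : IsLeast {r : ℝ | ∃ ω : ℂ, ω ≠ 0 ∧ transMat ω ∈ Γ ∧ r = ‖ω‖} T) :
    ∀ γ ∈ Γ, (γ : Matrix (Fin 2) (Fin 2) ℂ) 1 0 ≠ 0 →
      1 / ‖(γ : Matrix (Fin 2) (Fin 2) ℂ) 1 0‖ ≤ T := by
  intro γ hγ hcne
  by_contra hlt
  push_neg at hlt
  obtain ⟨ω, hω0, hωΓ, hTω⟩ := hT.1
  have hT0 : 0 < T := hTω ▸ (norm_pos_iff.mpr hω0)
  set g : ℕ → Matrix.SpecialLinearGroup (Fin 2) ℂ := conjSeq (transMat ω) γ with hg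
  have hgΓ : ∀ n, g n ∈ Γ := by
    intro n
    induction n with
    | zero => exact hγ
    | succ n ih => exact Γ.mul_mem (Γ.mul_mem ih hωΓ) (Γ.inv_mem ih)
  set a : ℕ → ℂ := fun n => (g n).1 0 0 with ha_def
  set c : ℕ → ℂ := fun n => (g n).1 1 0 with hc_def
  have hrec : ∀ n, (g (n+1)).1 =
      !![1 - a n * c n * ω, (a n)^2 * ω; -(c n)^2 * ω, 1 + a n * c n * ω] := by
    intro n
    have : g (n+1) = g n * transMat ω * (g n)⁻¹ := rfl
    rw [this]
    exact conj_coe (g n) ω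
  have ha : ∀ n, a (n+1) = 1 - a n * c n * ω := by
    intro n
    have := congrFun (congrFun (hrec n) 0) 0
    simpa [ha_def] using this
  have hc : ∀ n, c (n+1) = -(c n)^2 * ω := by
    intro n
    have := congrFun (congrFun (hrec n) 1) 0
    simpa [hc_def] using this
  have hc0 : 0 < ‖c 0‖ := norm_pos_iff.mpr hcne
  set μ : ℝ := ‖c 0‖ * T with hμ_def
  have hμ0 : 0 < μ := mul_pos hc0 hT0
  have hμ1 : μ < 1 := by
    have := (lt_div_iff₀ hc0).mp hlt
    linarith [this]
  -- |c n| * T = μ ^ (2 ^ n)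
  have hcabs : ∀ n, ‖c n‖ * T = μ ^ (2 ^ n) := by
    intro n
    induction n with
    | zero => simp [hμ_def]
    | succ n ih =>
      have h1 : ‖c (n+1)‖ = ‖c n‖ ^ 2 * ‖ω‖ := by
        rw [hc n]
        simp [map_mul, map_pow]
      rw [h1, ← hTω]
      have : ‖c n‖ ^ 2 * T * T = (‖c n‖ * T) ^ 2 := by ring
      rw [this, ih, ← pow_mul, pow_succ]
  have hcn0 : ∀ n, c n ≠ 0 := by
    intro n
    induction n with
    | zero => exact hcne
    | succ n ih =>
      rw [hc n]
      exact mul_ne_zero (neg_ne_zero.mpr (pow_ne_zero 2 ih)) hω0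
  set M : ℝ := max (‖a 0‖) (1 / (1 - μ)) with hM_def
  have hμlt : 0 < 1 - μ := by linarith
  have hM1 : 1 / (1 - μ) ≤ M := le_max_right _ _
  have hM0 : 0 < M := lt_of_lt_of_le (by positivity) hM1
  have hμpow : ∀ n : ℕ, μ ^ (2 ^ n) ≤ μ := by
    intro n
    calc μ ^ (2 ^ n) ≤ μ ^ 1 :=
          pow_le_pow_of_le_one hμ0.le hμ1.le (Nat.one_le_two_pow)
      _ = μ := pow_one μ
  have habsa : ∀ n, ‖a n‖ ≤ M := by
    intro n
    induction n with
    | zero => exact le_max_left _ _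
    | succ n ih =>
      rw [ha n]
      calc ‖1 - a n * c n * ω‖
          ≤ 1 + ‖a n * c n * ω‖ := by
            simpa using norm_sub_le (1 : ℂ) (a n * c n * ω)
        _ = 1 + ‖a n‖ * (‖c n‖ * ‖ω‖) := by
            simp [map_mul, mul_assoc]
        _ = 1 + ‖a n‖ * (μ ^ (2 ^ n)) := by rw [← hTω, hcabs n]
        _ ≤ 1 + M * μ := by
            have h2 : ‖a n‖ * (μ ^ (2 ^ n)) ≤ M * μ :=
              mul_le_mul ih (hμpow n) (by positivity) hM0.le
            linarith
        _ ≤ M := by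
            have : 1 ≤ M * (1 - μ) := by
              rw [div_le_iff₀ hμlt] at hM1
              linarith
            nlinarith
  -- |a (n+1) - 1| ≤ M * μ ^ (n+1)
  have hshift : ∀ n : ℕ, μ ^ (2 ^ n) ≤ μ ^ (n + 1) := by
    intro n
    exact pow_le_pow_of_le_one hμ0.le hμ1.le (Nat.lt_two_pow_self (n := n))
  have ha1 : ∀ n, ‖a (n+1) - 1‖ ≤ M * μ ^ (n+1) := by
    intro n
    have h1 : a (n+1) - 1 = -(a n * c n * ω) := by rw [ha n]; ring
    rw [h1, norm_neg]
    calc ‖a n * c n * ω‖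
        = ‖a n‖ * (‖c n‖ * ‖ω‖) := by
          simp [map_mul, mul_assoc]
      _ = ‖a n‖ * μ ^ (2 ^ n) := by rw [← hTω, hcabs n]
      _ ≤ M * μ ^ (n+1) := mul_le_mul (habsa n) (hshift n) (by positivity) hM0.le
  have hμtends : Tendsto (fun n : ℕ => μ ^ n) atTop (nhds 0) :=
    tendsto_pow_atTop_nhds_zero_of_lt_one hμ0.le hμ1
  -- a (n+1) → 1
  have hA : Tendsto (fun n => a (n+1)) atTop (nhds 1) := by
    rw [← tendsto_sub_nhds_zero_iff]
    refine squeeze_zero_norm (f := fun n => a (n+1) - 1) (a := fun n => M * μ ^ (n+1)) ?_ ?_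
    · intro n; simpa using ha1 n
    · have : Tendsto (fun n : ℕ => μ ^ (n+1)) atTop (nhds 0) :=
        hμtends.comp (tendsto_add_atTop_nat 1)
      simpa using this.const_mul M
  have hC : Tendsto c atTop (nhds 0) := by
    refine squeeze_zero_norm (a := fun n => (1/T) * μ ^ n) ?_ ?_
    · intro n
      have h1 : ‖c n‖ = μ ^ (2 ^ n) / T := by
        rw [← hcabs n, mul_div_cancel_right₀ _ hT0.ne']
      have h2 : μ ^ (2 ^ n) ≤ μ ^ n :=
        pow_le_pow_of_le_one hμ0.le hμ1.le (Nat.le_of_lt (Nat.lt_two_pow_self (n := n)))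
      rw [h1, div_eq_mul_inv, mul_comm]
      rw [one_div]
      exact mul_le_mul_of_nonneg_left h2 (by positivity)
    · simpa using hμtends.const_mul (1/T)
  have hC1 : Tendsto (fun n => c (n+1)) atTop (nhds 0) :=
    hC.comp (tendsto_add_atTop_nat 1)
  -- the test sequence
  set f : ℕ → Matrix.SpecialLinearGroup (Fin 2) ℂ :=
    fun n => g (n+2) * (transMat ω)⁻¹ with hf_def
  have hfΓ : ∀ n, f n ∈ Γ := fun n => Γ.mul_mem (hgΓ (n+2)) (Γ.inv_mem hωΓ)
  have hfcoe : ∀ n, (f n).1 =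
      !![1 - a (n+1) * c (n+1) * ω, -(1 - a (n+1) * c (n+1) * ω) * ω + (a (n+1))^2 * ω;
         -(c (n+1))^2 * ω, (c (n+1))^2 * ω * ω + (1 + a (n+1) * c (n+1) * ω)] := by
    intro n
    have h1 : (f n).1 = (g (n+2)).1 * ((transMat ω)⁻¹ :
        Matrix.SpecialLinearGroup (Fin 2) ℂ).1 := rfl
    rw [h1, hrec (n+1), transMat_inv_coe]
    ext i j
    fin_cases i <;> fin_cases j <;>
      simp [Matrix.mul_apply, Fin.sum_univ_two] <;> ring
  have htendsto : Tendsto (fun n => ((f n : Matrix (Fin 2) (Fin 2) ℂ))) atTop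
      (nhds (1 : Matrix (Fin 2) (Fin 2) ℂ)) := by
    rw [Matrix.one_fin_two]
    refine tendsto_pi_nhds.mpr ?_
    intro i
    rw [tendsto_pi_nhds]
    intro j
    have hconst : Tendsto (fun _ : ℕ => ω) atTop (nhds ω) := tendsto_const_nhds
    fin_cases i <;> fin_cases j <;> simp only [hfcoe] <;> simp
    · -- entry (0,0) → 1
      have : Tendsto (fun n => 1 - a (n+1) * c (n+1) * ω) atTop (nhds (1 - 1 * 0 * ω)) :=
        tendsto_const_nhds.sub ((hA.mul hC1).mul hconst)
      simpa using this
    · -- entry (0,1) → 0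
      have : Tendsto (fun n => -(1 - a (n+1) * c (n+1) * ω) * ω + (a (n+1))^2 * ω) atTop
          (nhds (-(1 - 1 * 0 * ω) * ω + 1^2 * ω)) :=
        ((tendsto_const_nhds.sub ((hA.mul hC1).mul hconst)).neg.mul hconst).add
          ((hA.pow 2).mul hconst)
      simpa using this
    · -- entry (1,0) → 0
      have : Tendsto (fun n => -(c (n+1))^2 * ω) atTop (nhds (-(0:ℂ)^2 * ω)) :=
        ((hC1.pow 2).neg).mul hconst
      simpa using this
    · -- entry (1,1) → 1
      have : Tendsto (fun n => (c (n+1))^2 * ω * ω + (1 + a (n+1) * c (n+1) * ω)) atTop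
          (nhds ((0:ℂ)^2 * ω * ω + (1 + 1 * 0 * ω))) :=
        (((hC1.pow 2).mul hconst).mul hconst).add
          (tendsto_const_nhds.add ((hA.mul hC1).mul hconst))
      simpa using this
  have hev := hdisc f hfΓ htendsto
  obtain ⟨N, hN⟩ := eventually_atTop.mp hev
  have hfN : f N = 1 := hN N (le_refl N)
  have hgN : g (N+2) = transMat ω := by
    have h0 : g (N+2) * (transMat ω)⁻¹ = 1 := hfN
    exact mul_inv_eq_one.mp h0
  have : c (N+2) = 0 := by
    have h1 : (g (N+2)).1 1 0 = (transMat ω).1 1 0 := by rw [hgN]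
    have h2 : (transMat ω).1 1 0 = 0 := by simp [transMat]
    simpa [hc_def] using h1.trans h2
  exact hcn0 (N+2) this
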